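/- arXiv:1212.4329 — 2 statements merged into one kernel-verified Lean document; each statement's English description precedes it below -/
import Mathlib

section
/- Let G ⊆ ℝ be a Gδ set such that ℝ \ G is not 𝔠-dense in itself, and let C_G be the set of all functions f : ℝ → ℝ whose set of continuity points {x ∈ ℝ : f is continuous at x} equals G. Then C_G is 𝔠-lineable, i.e. C_G ∪ {0} contains a linear subspace of ℝ^ℝ of dimension 𝔠. -/
open Cardinal

/-- `A ⊆ ℝ` is `𝔠`-dense in itself: `A` is nonempty and for every open interval `I`, either
`A ∩ I = ∅` or `A ∩ I` has cardinality `𝔠`. -/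
def CDenseInItself (A : Set ℝ) : Prop :=
  A.Nonempty ∧ ∀ a b : ℝ, a < b →
    A ∩ Set.Ioo a b = ∅ ∨ #(A ∩ Set.Ioo a b : Set ℝ) = Cardinal.continuum

/-- A subset `E` of a real vector space is `κ`-lineable if `E ∪ {0}` contains a linear
subspace of dimension `κ`. -/
def Lineable {M : Type} [AddCommGroup M] [Module ℝ M] (E : Set M) (κ : Cardinal) : Prop :=
  ∃ V : Submodule ℝ M, Module.rank ℝ V = κ ∧ (V : Set M) ⊆ E ∪ {0}

/-- The set of all `f : ℝ → ℝ` whose set of continuity points equals `G`. -/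
def ContinuityClass (G : Set ℝ) : Set (ℝ → ℝ) :=
  {f | {x : ℝ | ContinuousAt f x} = G}

open Filter Topology Set

namespace S18



theorem texp_zero {a : ℝ} (ha : a < 0) :
    Tendsto (fun s : ℝ => Real.exp (a * s)) atTop (𝓝 0) := by
  have h1 : Tendsto (fun s : ℝ => Real.exp ((-a) * s)) atTop atTop :=
    Real.tendsto_exp_atTop.comp (Tendsto.const_mul_atTop (neg_pos.2 ha) tendsto_id)
  have := h1.inv_tendsto_atTop
  refine this.congr fun s => ?_
  simp [← Real.exp_neg, neg_mul]

theorem expsum_const (A : Finset ℝ) : ∀ (c : ℝ → ℝ) (C : ℝ),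
    (∀ s : ℝ, ∑ b ∈ A, c b * Real.exp (Real.exp b * s) = C) → ∀ b ∈ A, c b = 0 := by
  induction A using Finset.strongInduction with
  | _ A ih =>
    intro c C hsum b hb
    have hAne : A.Nonempty := ⟨b, hb⟩
    set M := A.max' hAne with hMdef
    have hMmem : M ∈ A := A.max'_mem hAne
    have hM : c M = 0 := by
      have h1 : Tendsto (fun s => ∑ b' ∈ A, c b' * Real.exp ((Real.exp b' - Real.exp M) * s))
          atTop (𝓝 (c M)) := by
        have h2 : Tendsto (fun s => ∑ b' ∈ A, c b' * Real.exp ((Real.exp b' - Real.exp M) * s))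
            atTop (𝓝 (∑ b' ∈ A, if b' = M then c M else 0)) := by
          refine tendsto_finset_sum _ fun b' hb' => ?_
          by_cases hbM : b' = M
          · subst hbM
            simp only [sub_self, zero_mul, Real.exp_zero, mul_one, if_true]
            exact tendsto_const_nhds
          · simp only [hbM, if_false]
            have hlt : Real.exp b' < Real.exp M :=
              Real.exp_lt_exp.2 (lt_of_le_of_ne (A.le_max' _ hb') hbM)
            have := (texp_zero (a := Real.exp b' - Real.exp M) (by linarith)).const_mul (c b')
            simpa using this
        simpa [Finset.sum_ite_eq' A M (fun _ => c M), hMmem] using h2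
      have h3 : (fun s => ∑ b' ∈ A, c b' * Real.exp ((Real.exp b' - Real.exp M) * s))
          = fun s => C * Real.exp (-Real.exp M * s) := by
        funext s
        rw [← hsum s, Finset.sum_mul]
        refine Finset.sum_congr rfl fun b' _ => ?_
        rw [mul_assoc, ← Real.exp_add]
        ring_nf
      have h4 : Tendsto (fun s => C * Real.exp (-Real.exp M * s)) atTop (𝓝 0) := by
        simpa using (texp_zero (a := -Real.exp M)
          (by simpa using Real.exp_pos M)).const_mul C
      rw [h3] at h1
      exact tendsto_nhds_unique h1 h4
    rcases eq_or_ne b M with rfl | hbM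
    · exact hM
    · have hsum' : ∀ s : ℝ, ∑ b' ∈ A.erase M, c b' * Real.exp (Real.exp b' * s) = C := by
        intro s
        have h5 := Finset.sum_erase_add A (fun b' => c b' * Real.exp (Real.exp b' * s)) hMmem
        have h6 := hsum s
        rw [← h5] at h6
        simp only [hM, zero_mul, add_zero] at h6
        exact h6
      exact ih (A.erase M) (Finset.erase_ssubset hMmem) c C hsum' b
        (Finset.mem_erase.2 ⟨hbM, hb⟩)

/-- If an exponential sum with not-all-zero coefficients is evaluated along a nonzero
sequence tending to `0`, it cannot be constant along that sequence. -/
theorem expsum_two_values (A : Finset ℝ) (c : ℝ → ℝ) (hA : ∃ b ∈ A, c b ≠ 0)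
    (v : ℕ → ℝ) (hv0 : ∀ j, v j ≠ 0) (hvlim : Tendsto v atTop (𝓝 0)) :
    ∃ j k, (∑ b ∈ A, c b * Real.exp (Real.exp b * v j))
      ≠ ∑ b ∈ A, c b * Real.exp (Real.exp b * v k) := by
  by_contra hcon
  push_neg at hcon
  set E : ℝ → ℝ := fun s => ∑ b ∈ A, c b * Real.exp (Real.exp b * s) with hE
  have hEan : AnalyticOnNhd ℝ E univ := by
    intro s _
    exact Finset.analyticAt_fun_sum _ fun b _ =>
      (analyticAt_const.mul ((analyticAt_const.mul analyticAt_id).rexp))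
  have hvtend : Tendsto v atTop (𝓝[≠] (0:ℝ)) := by
    refine tendsto_nhdsWithin_of_tendsto_nhds_of_eventually_within _ hvlim ?_
    exact Eventually.of_forall fun j => hv0 j
  have hfreq : ∃ᶠ z in 𝓝[≠] (0:ℝ), E z = E (v 0) := by
    refine hvtend.frequently ?_
    exact Frequently.of_forall fun j => hcon j 0
  have heq : EqOn E (fun _ => E (v 0)) univ :=
    hEan.eqOn_of_preconnected_of_frequently_eq
      (analyticOnNhd_const) isPreconnected_univ (mem_univ 0) hfreq
  have hzero := expsum_const A c (E (v 0)) (fun s => heq (mem_univ s))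
  obtain ⟨b, hbA, hbne⟩ := hA
  exact hbne (hzero b hbA)




section SeqChoice

variable (S : ℕ → Set ℝ) (hS : ∀ t, (S t).Infinite)

noncomputable def seqList : ℕ → List ℝ
  | 0 => []
  | (t+1) => seqList t ++ [((hS t).diff (seqList t).finite_toSet).nonempty.some]

noncomputable def seqChoice (t : ℕ) : ℝ :=
  ((hS t).diff (seqList S hS t).finite_toSet).nonempty.some

theorem seqList_succ (t : ℕ) :
    seqList S hS (t+1) = seqList S hS t ++ [seqChoice S hS t] := rfl

theorem seqChoice_spec (t : ℕ) :
    seqChoice S hS t ∈ S t ∧ seqChoice S hS t ∉ seqList S hS t :=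
  ((hS t).diff (seqList S hS t).finite_toSet).nonempty.some_mem

theorem seqChoice_mem (t : ℕ) : seqChoice S hS t ∈ S t := (seqChoice_spec S hS t).1

theorem seqChoice_mem_list {s t : ℕ} (h : s < t) : seqChoice S hS s ∈ seqList S hS t := by
  induction t with
  | zero => omega
  | succ t iht =>
    rw [seqList_succ]
    rcases Nat.lt_succ_iff_lt_or_eq.1 h with h' | h'
    · exact List.mem_append_left _ (iht h')
    · subst h'; exact List.mem_append_right _ (List.mem_singleton_self _)

theorem seqChoice_inj : Function.Injective (seqChoice S hS) := by
  intro s t hst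
  by_contra hne
  rcases Nat.lt_or_ge s t with h | h
  · exact (seqChoice_spec S hS t).2 (hst ▸ seqChoice_mem_list S hS h)
  · have h' : t < s := by omega
    exact (seqChoice_spec S hS s).2 (hst ▸ seqChoice_mem_list S hS h')

end SeqChoice

/-- Every subset of ℝ has a countable subset dense in it. -/
theorem exists_cd (A : Set ℝ) :
    ∃ Z : Set ℝ, Z ⊆ A ∧ Z.Countable ∧ A ⊆ closure Z := by
  obtain ⟨s, hsc, hsd⟩ := TopologicalSpace.exists_countable_dense A
  refine ⟨Subtype.val '' s, by simp [Set.image_subset_iff], hsc.image _, ?_⟩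
  intro x hx
  have h1 : (⟨x, hx⟩ : A) ∈ closure s := hsd _
  have h2 := (map_mem_closure continuous_subtype_val h1 (fun y hy => Set.mem_image_of_mem _ hy))
  exact h2

/-- An accumulation point of a set has infinitely many points of the set in any ball. -/
theorem acc_infinite {D : Set ℝ} {w : ℝ} (hw : w ∈ D)
    (hni : ¬ ∃ δ : ℝ, 0 < δ ∧ Metric.ball w δ ∩ D = {w}) {r : ℝ} (hr : 0 < r) :
    ((Metric.ball w r ∩ D) \ {w}).Infinite := by
  have hne : ∀ r' : ℝ, 0 < r' → ((Metric.ball w r' ∩ D) \ {w}).Nonempty := by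
    intro r' hr'
    by_contra hemp
    rw [Set.not_nonempty_iff_eq_empty] at hemp
    refine hni ⟨r', hr', ?_⟩
    apply Set.eq_singleton_iff_unique_mem.2
    refine ⟨⟨Metric.mem_ball_self hr', hw⟩, fun z hz => ?_⟩
    by_contra hzw
    exact (Set.eq_empty_iff_forall_notMem.1 hemp) z ⟨hz, hzw⟩
  intro hfin
  obtain ⟨z0, hz0⟩ := hne r hr
  have hpos : ∀ z ∈ (Metric.ball w r ∩ D) \ {w}, 0 < dist z w := by
    intro z hz
    rcases hz with ⟨_, hz2⟩
    simpa [dist_pos] using hz2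
  set T := hfin.toFinset with hT
  have hTne : T.Nonempty := by
    rw [hT, Set.Finite.toFinset_nonempty]; exact ⟨z0, hz0⟩
  set r' := T.inf' hTne (fun z => dist z w) with hr'
  have hr'pos : 0 < r' := by
    rw [hr', Finset.lt_inf'_iff]
    intro z hz
    exact hpos z (hfin.mem_toFinset.1 hz)
  obtain ⟨z1, hz1⟩ := hne (min r r') (lt_min hr hr'pos)
  have hz1' : z1 ∈ (Metric.ball w r ∩ D) \ {w} := by
    refine ⟨⟨?_, hz1.1.2⟩, hz1.2⟩
    have := hz1.1.1
    rw [Metric.mem_ball] at this ⊢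
    exact lt_of_lt_of_le this (min_le_left _ _)
  have hge : r' ≤ dist z1 w := by
    rw [hr']
    exact Finset.inf'_le _ (hfin.mem_toFinset.2 hz1')
  have hlt : dist z1 w < r' := lt_of_lt_of_le (Metric.mem_ball.1 hz1.1.1) (min_le_right _ _)
  exact absurd hge (not_le.2 hlt)

theorem exists_min_bound (R : ℕ → ℝ) (hR : ∀ i, 0 < R i) (n : ℕ) {c : ℝ} (hc : 0 < c) :
    ∃ δ : ℝ, 0 < δ ∧ δ ≤ c ∧ ∀ i < n, δ ≤ R i := by
  induction n with
  | zero => exact ⟨c, hc, le_refl c, fun i hi => by omega⟩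
  | succ n ihn =>
    obtain ⟨δ, hδ, hδc, hδR⟩ := ihn
    refine ⟨min δ (R n), lt_min hδ (hR n), le_trans (min_le_left _ _) hδc, fun i hi => ?_⟩
    rcases Nat.lt_succ_iff_lt_or_eq.1 hi with h | h
    · exact le_trans (min_le_left _ _) (hδR i h)
    · subst h; exact min_le_right _ _




section Main

variable (U : ℕ → Set ℝ)

def Gg : Set ℝ := ⋂ n, U n

def Dd : Set ℝ := (Gg U)ᶜ

def Ff (m : ℕ) : Set ℝ := ⋃ n ∈ {n : ℕ | n ≤ m}, (U n)ᶜ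

theorem Ff_closed (hU : ∀ n, IsOpen (U n)) (m : ℕ) : IsClosed (Ff U m) :=
  (Set.finite_le_nat m).isClosed_biUnion (fun n _ => (hU n).isClosed_compl)

theorem Ff_mono {m m' : ℕ} (h : m ≤ m') : Ff U m ⊆ Ff U m' := by
  refine Set.biUnion_subset_biUnion_left ?_
  intro n hn
  exact le_trans hn h

theorem mem_Ff_iff {z : ℝ} {m : ℕ} : z ∈ Ff U m ↔ ∃ n ≤ m, z ∉ U n := by
  simp [Ff]

theorem Ff_subset_Dd (m : ℕ) : Ff U m ⊆ Dd U := by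
  intro z hz
  rw [mem_Ff_iff] at hz
  obtain ⟨n, _, hn⟩ := hz
  simp only [Dd, Gg, Set.mem_compl_iff, Set.mem_iInter]
  exact fun h => hn (h n)

theorem mem_Dd_iff {z : ℝ} : z ∈ Dd U ↔ ∃ m, z ∈ Ff U m := by
  constructor
  · intro hz
    simp only [Dd, Gg, Set.mem_compl_iff, Set.mem_iInter, not_forall] at hz
    obtain ⟨n, hn⟩ := hz
    exact ⟨n, (mem_Ff_iff U).2 ⟨n, le_refl n, hn⟩⟩
  · rintro ⟨m, hm⟩
    exact Ff_subset_Dd U m hm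

noncomputable def Zs (m : ℕ) : Set ℝ := (exists_cd (Ff U m)).choose

theorem Zs_subset (m : ℕ) : Zs U m ⊆ Ff U m := (exists_cd (Ff U m)).choose_spec.1

theorem Zs_countable (m : ℕ) : (Zs U m).Countable := (exists_cd (Ff U m)).choose_spec.2.1

theorem Zs_dense (m : ℕ) : Ff U m ⊆ closure (Zs U m) := (exists_cd (Ff U m)).choose_spec.2.2

open Classical in
noncomputable def en (m : ℕ) : ℕ → ℝ :=
  if h : (Zs U m).Nonempty then ((Zs_countable U m).exists_eq_range h).choose else fun _ => 0

theorem en_range (m : ℕ) (h : (Zs U m).Nonempty) : Zs U m = Set.range (en U m) := by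
  classical
  rw [en, dif_pos h]
  exact ((Zs_countable U m).exists_eq_range h).choose_spec

theorem en_mem (m l : ℕ) (h : (Zs U m).Nonempty) : en U m l ∈ Zs U m := by
  rw [en_range U m h]; exact Set.mem_range_self l

theorem en_surj (m : ℕ) (h : (Zs U m).Nonempty) {w : ℝ} (hw : w ∈ Zs U m) :
    ∃ l, en U m l = w := by
  rw [en_range U m h] at hw; exact hw

/-- heights -/
noncomputable def hb (m : ℕ) : ℝ := (2⁻¹ : ℝ) ^ m

theorem hb_pos (m : ℕ) : 0 < hb m := pow_pos (by norm_num) m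

theorem hb_le_one (m : ℕ) : hb m ≤ 1 :=
  pow_le_one₀ (by norm_num) (by norm_num)

theorem hb_anti {m m' : ℕ} (h : m ≤ m') : hb m' ≤ hb m :=
  pow_le_pow_of_le_one (by norm_num) (by norm_num) h

theorem hb_add (m m' : ℕ) : hb (m + m') = hb m * hb m' := pow_add _ _ _

theorem hb_lt_of_lt {m N : ℕ} (h : hb N < hb m) : m < N := by
  by_contra hc
  exact absurd (hb_anti (not_lt.1 hc)) (not_le.2 h)

/-- base index decoding -/
def mI (i : ℕ) : ℕ := (Nat.unpair i).1
def lI (i : ℕ) : ℕ := (Nat.unpair i).2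

noncomputable def bW (i : ℕ) : ℝ := en U (mI i) (lI i)

def validB (i : ℕ) : Prop := (Zs U (mI i)).Nonempty

/-- isolated points of D -/
def IsoP (w : ℝ) : Prop := w ∈ Dd U ∧ ∃ δ : ℝ, 0 < δ ∧ Metric.ball w δ ∩ Dd U = {w}

open Classical in
noncomputable def isoR (w : ℝ) : ℝ :=
  if h : IsoP U w then h.2.choose else 1

theorem isoR_pos (w : ℝ) : 0 < isoR U w := by
  classical
  rw [isoR]
  split
  · next h => exact h.2.choose_spec.1
  · norm_num

theorem isoR_spec {w : ℝ} (h : IsoP U w) :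
    Metric.ball w (isoR U w) ∩ Dd U = {w} := by
  classical
  rw [isoR, dif_pos h]
  exact h.2.choose_spec.2

open Classical in
noncomputable def rk (w : ℝ) : ℕ :=
  if h : ∃ m, w ∈ Ff U m then Nat.find h else 0

theorem rk_spec {w : ℝ} (hw : w ∈ Dd U) : w ∈ Ff U (rk U w) := by
  classical
  have h : ∃ m, w ∈ Ff U m := (mem_Dd_iff U).1 hw
  rw [rk, dif_pos h]
  exact Nat.find_spec h

theorem rk_min {w : ℝ} {m : ℕ} (hm : w ∈ Ff U m) : rk U w ≤ m := by
  classical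
  have h : ∃ m, w ∈ Ff U m := ⟨m, hm⟩
  rw [rk, dif_pos h]
  exact Nat.find_min' h hm

/-- every isolated point of `D` is in `Zs (rk w)` (isolated points belong to any dense set) -/
theorem iso_mem_Zs {w : ℝ} (h : IsoP U w) : w ∈ Zs U (rk U w) := by
  by_contra hnz
  have hwF : w ∈ Ff U (rk U w) := rk_spec U h.1
  have hwc : w ∈ closure (Zs U (rk U w)) := Zs_dense U (rk U w) hwF
  obtain ⟨δ, hδ, hball⟩ := h.2
  obtain ⟨z, hz, hzd⟩ := Metric.mem_closure_iff.1 hwc δ hδ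
  have hzD : z ∈ Metric.ball w δ ∩ Dd U := by
    constructor
    · rw [Metric.mem_ball, dist_comm]; exact hzd
    · exact Ff_subset_Dd U _ (Zs_subset U _ hz)
  rw [hball] at hzD
  rw [Set.mem_singleton_iff] at hzD
  subst hzD
  exact hnz hz

theorem iso_base_exists {w : ℝ} (h : IsoP U w) : ∃ i, validB U i ∧ bW U i = w := by
  have hz := iso_mem_Zs U h
  have hne : (Zs U (rk U w)).Nonempty := ⟨w, hz⟩
  obtain ⟨l, hl⟩ := en_surj U (rk U w) hne hz
  exact ⟨Nat.pair (rk U w) l, by simp [validB, mI, hne], by simp [bW, mI, lI, hl]⟩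

open Classical in
noncomputable def idx (w : ℝ) : ℕ :=
  if h : ∃ i, validB U i ∧ bW U i = w then Nat.find h else 0

theorem idx_spec {w : ℝ} (h : ∃ i, validB U i ∧ bW U i = w) :
    validB U (idx U w) ∧ bW U (idx U w) = w := by
  classical
  rw [idx, dif_pos h]
  exact Nat.find_spec h

/-- sweep length -/
noncomputable def sw (w : ℝ) : ℝ := min ((2⁻¹:ℝ) ^ (idx U w)) (isoR U w) / 4

theorem sw_pos (w : ℝ) : 0 < sw U w := by
  have := isoR_pos U w
  have h2 : (0:ℝ) < (2⁻¹:ℝ) ^ (idx U w) := pow_pos (by norm_num) _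
  have h3 : 0 < min ((2⁻¹:ℝ) ^ (idx U w)) (isoR U w) := lt_min h2 this
  simp only [sw]
  linarith

def Zone (w : ℝ) : Set ℝ := Set.Ioo w (w + sw U w)

end Main


section Main2

variable (U : ℕ → Set ℝ)

/-- slot decoding -/
def iT (t : ℕ) : ℕ := (Nat.unpair t).1
def kT (t : ℕ) : ℕ := (Nat.unpair t).2

noncomputable def wT (t : ℕ) : ℝ := bW U (iT t)

def validC (t : ℕ) : Prop := validB U (iT t) ∧ ¬ IsoP U (wT U t)

theorem wT_mem_Zs {t : ℕ} (h : validC U t) : wT U t ∈ Zs U (mI (iT t)) :=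
  en_mem U _ _ h.1

theorem wT_mem_Dd {t : ℕ} (h : validC U t) : wT U t ∈ Dd U :=
  Ff_subset_Dd U _ (Zs_subset U _ (wT_mem_Zs U h))

noncomputable def rad (t : ℕ) : ℝ := min ((2⁻¹:ℝ) ^ (iT t)) ((2⁻¹:ℝ) ^ (kT t))

theorem rad_pos (t : ℕ) : 0 < rad t :=
  lt_min (pow_pos (by norm_num) _) (pow_pos (by norm_num) _)

open Classical in
noncomputable def SS (t : ℕ) : Set ℝ :=
  if validC U t then (Metric.ball (wT U t) (rad t) ∩ Dd U) \ {wT U t} else Set.univ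

theorem SS_infinite (t : ℕ) : (SS U t).Infinite := by
  classical
  rw [SS]
  split
  · next h =>
    refine acc_infinite (wT_mem_Dd U h) ?_ (rad_pos t)
    intro hex
    exact h.2 ⟨wT_mem_Dd U h, hex⟩
  · exact Set.infinite_univ

noncomputable def pk : ℕ → ℝ := seqChoice (SS U) (SS_infinite U)

theorem pk_inj : Function.Injective (pk U) := seqChoice_inj _ _

theorem pk_spec {t : ℕ} (h : validC U t) :
    pk U t ∈ Metric.ball (wT U t) (rad t) ∧ pk U t ∈ Dd U ∧ pk U t ≠ wT U t := by
  classical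
  have := seqChoice_mem (SS U) (SS_infinite U) t
  rw [pk]
  rw [SS, if_pos h] at this
  exact ⟨this.1.1, this.1.2, this.2⟩

noncomputable def val (t : ℕ) : ℝ := hb (mI (iT t)) * hb ((Nat.unpair (kT t)).2 + 3)

theorem val_pos (t : ℕ) : 0 < val t := mul_pos (hb_pos _) (hb_pos _)

noncomputable def phi (t : ℝ) : ℝ := (1 - t) * (1 + Real.sin t⁻¹) / 8

theorem phi_nonneg {t : ℝ} (h : t ≤ 1) : 0 ≤ phi t := by
  have h1 : 0 ≤ 1 - t := by linarith
  have h2 : 0 ≤ 1 + Real.sin t⁻¹ := by nlinarith [Real.neg_one_le_sin t⁻¹]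
  rw [phi]
  positivity

theorem phi_le {t : ℝ} (h0 : 0 ≤ t) (h1 : t ≤ 1) : phi t ≤ (1 - t) / 4 := by
  have h2 : 1 + Real.sin t⁻¹ ≤ 2 := by nlinarith [Real.sin_le_one t⁻¹]
  have h3 : 0 ≤ 1 - t := by linarith
  rw [phi]
  rw [div_le_div_iff₀ (by norm_num) (by norm_num)]
  nlinarith

theorem phi_le_quarter {t : ℝ} (h0 : 0 ≤ t) (h1 : t ≤ 1) : phi t ≤ 4⁻¹ := by
  have := phi_le h0 h1
  have h3 : (1 - t)/4 ≤ 4⁻¹ := by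
    rw [div_le_iff₀ (by norm_num : (0:ℝ) < 4)]
    norm_num
    linarith
  linarith

open Classical in
noncomputable def q (z : ℝ) : ℝ :=
  if h1 : ∃ w, IsoP U w ∧ z ∈ Zone U w then
    hb (rk U h1.choose) * phi ((z - h1.choose) / sw U h1.choose)
  else if h2 : ∃ t, validC U t ∧ pk U t = z then val h2.choose
  else 0

theorem Zone_dist {w z : ℝ} (hz : z ∈ Zone U w) : dist z w ≤ sw U w := by
  rcases hz with ⟨h1, h2⟩
  rw [Real.dist_eq, abs_of_pos (by linarith)]
  linarith

theorem Zone_subset_ball {w z : ℝ} (hz : z ∈ Zone U w) : dist z w < isoR U w := by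
  rcases hz with ⟨h1, h2⟩
  rw [Real.dist_eq, abs_of_pos (by linarith)]
  have hsw : sw U w ≤ isoR U w / 4 := by
    rw [sw]
    have : min ((2⁻¹:ℝ) ^ (idx U w)) (isoR U w) ≤ isoR U w := min_le_right _ _
    linarith
  have := isoR_pos U w
  linarith

theorem Zone_subset_Gg {w z : ℝ} (hw : IsoP U w) (hz : z ∈ Zone U w) : z ∉ Dd U := by
  intro hzD
  have hball : z ∈ Metric.ball w (isoR U w) ∩ Dd U :=
    ⟨Metric.mem_ball.2 (Zone_subset_ball U hz), hzD⟩
  rw [isoR_spec U hw, Set.mem_singleton_iff] at hball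
  subst hball
  exact absurd hz.1 (lt_irrefl _)

theorem Zone_unique {w w' z : ℝ} (hw : IsoP U w) (hw' : IsoP U w')
    (hz : z ∈ Zone U w) (hz' : z ∈ Zone U w') : w = w' := by
  by_contra hne
  have h1 : isoR U w ≤ dist w w' := by
    by_contra hlt
    have : w' ∈ Metric.ball w (isoR U w) ∩ Dd U :=
      ⟨Metric.mem_ball.2 (by rw [dist_comm]; exact not_le.1 hlt), hw'.1⟩
    rw [isoR_spec U hw, Set.mem_singleton_iff] at this
    exact hne this.symm
  have h2 : isoR U w' ≤ dist w w' := by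
    by_contra hlt
    have : w ∈ Metric.ball w' (isoR U w') ∩ Dd U :=
      ⟨Metric.mem_ball.2 (not_le.1 hlt), hw.1⟩
    rw [isoR_spec U hw', Set.mem_singleton_iff] at this
    exact hne this
  have h3 : dist w w' ≤ dist z w + dist z w' := dist_triangle_left w w' z
  have h4 := Zone_dist U hz
  have h5 := Zone_dist U hz'
  have h6 := isoR_pos U w
  have h7 := isoR_pos U w'
  have h8 : sw U w ≤ isoR U w / 4 := by
    rw [sw]; have : min ((2⁻¹:ℝ) ^ (idx U w)) (isoR U w) ≤ isoR U w := min_le_right _ _; linarith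
  have h9 : sw U w' ≤ isoR U w' / 4 := by
    rw [sw]; have : min ((2⁻¹:ℝ) ^ (idx U w')) (isoR U w') ≤ isoR U w' := min_le_right _ _; linarith
  rcases le_total (isoR U w) (isoR U w') with hc | hc
  · linarith
  · linarith

theorem q_zone {w z : ℝ} (hw : IsoP U w) (hz : z ∈ Zone U w) :
    q U z = hb (rk U w) * phi ((z - w) / sw U w) := by
  classical
  have h1 : ∃ w', IsoP U w' ∧ z ∈ Zone U w' := ⟨w, hw, hz⟩
  rw [q, dif_pos h1]
  have := h1.choose_spec
  have heq : h1.choose = w := Zone_unique U this.1 hw this.2 hz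
  rw [heq]

theorem q_carrier {t : ℕ} (h : validC U t) : q U (pk U t) = val t := by
  classical
  have hD := (pk_spec U h).2.1
  have h1 : ¬ ∃ w, IsoP U w ∧ pk U t ∈ Zone U w := by
    rintro ⟨w, hw, hz⟩
    exact (Zone_subset_Gg U hw hz) hD
  have h2 : ∃ t', validC U t' ∧ pk U t' = pk U t := ⟨t, h, rfl⟩
  rw [q, dif_neg h1, dif_pos h2]
  have := h2.choose_spec
  have : h2.choose = t := pk_inj U this.2
  rw [this]

theorem q_cases (z : ℝ) :
    q U z = 0 ∨ (∃ w, IsoP U w ∧ z ∈ Zone U w ∧ q U z = hb (rk U w) * phi ((z - w) / sw U w))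
      ∨ (∃ t, validC U t ∧ pk U t = z ∧ q U z = val t) := by
  classical
  by_cases h1 : ∃ w, IsoP U w ∧ z ∈ Zone U w
  · right; left
    obtain ⟨w, hw, hz⟩ := h1
    exact ⟨w, hw, hz, q_zone U hw hz⟩
  · by_cases h2 : ∃ t, validC U t ∧ pk U t = z
    · right; right
      obtain ⟨t, ht, hp⟩ := h2
      refine ⟨t, ht, hp, ?_⟩
      rw [← hp, q_carrier U ht]
    · left; rw [q, dif_neg h1, dif_neg h2]

theorem q_zero_of_G {z : ℝ} (hz : z ∉ Dd U) (hnz : ¬ ∃ w, IsoP U w ∧ z ∈ Zone U w) :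
    q U z = 0 := by
  classical
  have h2 : ¬ ∃ t, validC U t ∧ pk U t = z := by
    rintro ⟨t, ht, hp⟩
    exact hz (hp ▸ (pk_spec U ht).2.1)
  rw [q, dif_neg hnz, dif_neg h2]

theorem q_nonneg (z : ℝ) : 0 ≤ q U z := by
  rcases q_cases U z with h | ⟨w, hw, hz, h⟩ | ⟨t, ht, hp, h⟩
  · rw [h]
  · rw [h]
    have h1 : (z - w)/sw U w ≤ 1 := by
      rcases hz with ⟨ha, hb'⟩
      rw [div_le_one (sw_pos U w)]
      linarith
    exact mul_nonneg (le_of_lt (hb_pos _)) (phi_nonneg h1)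
  · rw [h]; exact le_of_lt (val_pos t)

end Main2

section Cont

variable (U : ℕ → Set ℝ)

theorem zone_frac_mem {w z : ℝ} (hz : z ∈ Zone U w) :
    0 < (z - w) / sw U w ∧ (z - w) / sw U w < 1 := by
  rcases hz with ⟨h1, h2⟩
  constructor
  · exact div_pos (by linarith) (sw_pos U w)
  · rw [div_lt_one (sw_pos U w)]; linarith

theorem q_zone_le {w z : ℝ} (hw : IsoP U w) (hz : z ∈ Zone U w) :
    q U z ≤ hb (rk U w) := by
  rw [q_zone U hw hz]
  have h := zone_frac_mem U hz
  have h2 := phi_le_quarter (le_of_lt h.1) (le_of_lt h.2)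
  have h3 := hb_pos (rk U w)
  nlinarith

theorem val_le (t : ℕ) : val t ≤ hb (mI (iT t)) := by
  have := hb_le_one ((Nat.unpair (kT t)).2 + 3)
  have := hb_pos (mI (iT t))
  have := hb_pos ((Nat.unpair (kT t)).2 + 3)
  rw [val]
  nlinarith

theorem exC (x : ℝ) (hx : x ∉ Dd U) (i : ℕ) :
    ∃ r : ℝ, 0 < r ∧ ∀ k, validC U (Nat.pair i k) → r ≤ dist x (pk U (Nat.pair i k)) := by
  classical
  by_cases hv : ∃ k, validC U (Nat.pair i k)
  · obtain ⟨k₀, hk₀⟩ := hv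
    set w := bW U i with hwdef
    have hwT : ∀ k, wT U (Nat.pair i k) = w := by
      intro k; rw [wT, iT, Nat.unpair_pair]
    have hwD : w ∈ Dd U := by
      have := wT_mem_Dd U hk₀
      rwa [hwT k₀] at this
    have hxw : 0 < dist x w := by
      rw [dist_pos]
      intro h; exact hx (h ▸ hwD)
    obtain ⟨K, hK⟩ := exists_pow_lt_of_lt_one (half_pos hxw) (by norm_num : (2⁻¹:ℝ) < 1)
    set R : ℕ → ℝ := fun k => if h : validC U (Nat.pair i k) then dist x (pk U (Nat.pair i k)) else 1 with hR
    have hRpos : ∀ k, 0 < R k := by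
      intro k
      simp only [hR]
      split
      · next h =>
        rw [dist_pos]
        intro heq
        exact hx (heq ▸ (pk_spec U h).2.1)
      · norm_num
    obtain ⟨δ, hδ, hδc, hδR⟩ := exists_min_bound R hRpos K (half_pos hxw)
    refine ⟨δ, hδ, fun k hk => ?_⟩
    rcases Nat.lt_or_ge k K with hkK | hkK
    · have := hδR k hkK
      rw [hR] at this
      simp only [dif_pos hk] at this
      exact this
    · have hd1 : dist (pk U (Nat.pair i k)) w < (2⁻¹:ℝ)^k := by
        have h1 := (pk_spec U hk).1
        rw [Metric.mem_ball, hwT k] at h1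
        exact lt_of_lt_of_le h1 (by
          rw [rad, kT, Nat.unpair_pair]
          exact min_le_right _ _)
      have hd2 : (2⁻¹:ℝ)^k ≤ (2⁻¹:ℝ)^K := pow_le_pow_of_le_one (by norm_num) (by norm_num) hkK
      have := dist_triangle x (pk U (Nat.pair i k)) w
      have h3 : dist x (pk U (Nat.pair i k)) ≥ dist x w - dist (pk U (Nat.pair i k)) w := by linarith
      linarith
  · exact ⟨1, by norm_num, fun k hk => absurd ⟨k, hk⟩ hv⟩

theorem exS (x : ℝ) (hx : x ∉ Dd U) (hnz : ¬ ∃ w, IsoP U w ∧ x ∈ Zone U w)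
    {ε : ℝ} (hε : 0 < ε) (i : ℕ) :
    ∃ r : ℝ, 0 < r ∧ ∀ w, IsoP U w → idx U w = i → ∀ z ∈ Zone U w, ε ≤ q U z → r ≤ dist x z := by
  classical
  by_cases hv : ∃ w, IsoP U w ∧ idx U w = i
  · obtain ⟨w, hw, hwi⟩ := hv
    have huniq : ∀ w', IsoP U w' → idx U w' = i → w' = w := by
      intro w' hw' hwi'
      have h1 := (idx_spec U (iso_base_exists U hw')).2
      have h2 := (idx_spec U (iso_base_exists U hw)).2
      rw [hwi'] at h1; rw [hwi] at h2
      rw [← h1, ← h2]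
    have hxw : x ≠ w := fun h => hx (h ▸ hw.1)
    rcases lt_trichotomy x w with hc | hc | hc
    · -- x < w : zone lies to the right of w
      refine ⟨w - x, by linarith, fun w' hw' hwi' z hz hq => ?_⟩
      rw [huniq w' hw' hwi'] at hz
      have h1 : w < z := hz.1
      rw [Real.dist_eq, abs_of_nonpos (by linarith)]
      linarith
    · exact absurd hc hxw
    · -- w < x; since x not in zone, x ≥ w + sw w
      have hxout : w + sw U w ≤ x := by
        by_contra hlt
        exact hnz ⟨w, hw, hc, not_le.1 hlt⟩
      have hswp := sw_pos U w
      refine ⟨4 * sw U w * ε, by positivity, fun w' hw' hwi' z hz hq => ?_⟩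
      have hww : w' = w := huniq w' hw' hwi'
      subst hww
      rw [q_zone U hw' hz] at hq
      have hfrac := zone_frac_mem U hz
      set t := (z - w') / sw U w' with ht
      have hphi : ε ≤ phi t := by
        have h1 := hb_le_one (rk U w')
        have h2 := hb_pos (rk U w')
        have h3 := phi_nonneg (le_of_lt hfrac.2)
        nlinarith
      have h4 : phi t ≤ (1 - t)/4 := phi_le (le_of_lt hfrac.1) (le_of_lt hfrac.2)
      have h5 : t ≤ 1 - 4*ε := by
        have : ε ≤ (1-t)/4 := le_trans hphi h4
        linarith
      have h7 : z - w' = sw U w' * t := by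
        rw [ht]
        field_simp
      have h6 : z ≤ w' + sw U w' * (1 - 4*ε) := by
        have h8 : sw U w' * t ≤ sw U w' * (1 - 4*ε) :=
          mul_le_mul_of_nonneg_left h5 (le_of_lt (sw_pos U w'))
        linarith
      have h9 : z < x := by
        have := sw_pos U w'
        nlinarith
      rw [Real.dist_eq, abs_of_nonneg (by linarith)]
      nlinarith [sw_pos U w']
  · exact ⟨1, by norm_num, fun w hw hwi => absurd ⟨w, hw, hwi⟩ hv⟩

theorem qsmall (hU : ∀ n, IsOpen (U n)) (x : ℝ) (hx : x ∉ Dd U)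
    (hnz : ¬ ∃ w, IsoP U w ∧ x ∈ Zone U w) {ε : ℝ} (hε : 0 < ε) :
    ∃ δ : ℝ, 0 < δ ∧ ∀ z, dist z x < δ → q U z < ε := by
  classical
  obtain ⟨N, hN⟩ := exists_pow_lt_of_lt_one hε (by norm_num : (2⁻¹:ℝ) < 1)
  have hNb : hb N < ε := hN
  by_cases hFne : (Ff U N).Nonempty
  · set d := Metric.infDist x (Ff U N) with hd
    have hdpos : 0 < d :=
      ((Ff_closed U hU N).notMem_iff_infDist_pos hFne).1 (fun h => hx (Ff_subset_Dd U N h))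
    obtain ⟨I₀, hI₀⟩ := exists_pow_lt_of_lt_one (half_pos hdpos) (by norm_num : (2⁻¹:ℝ) < 1)
    set R : ℕ → ℝ := fun i =>
      min (exC U x hx i).choose (exS U x hx hnz hε i).choose with hR
    have hRpos : ∀ i, 0 < R i := fun i =>
      lt_min (exC U x hx i).choose_spec.1 (exS U x hx hnz hε i).choose_spec.1
    obtain ⟨δ, hδ, hδc, hδR⟩ := exists_min_bound R hRpos I₀ (half_pos hdpos)
    refine ⟨δ, hδ, fun z hz => ?_⟩
    by_contra hq
    push_neg at hq
    rcases q_cases U z with h0 | ⟨w, hw, hzz, hqz⟩ | ⟨t, ht, hpz, hqz⟩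
    · rw [h0] at hq; linarith
    · -- zone case
      have h1 : ε ≤ hb (rk U w) := le_trans hq (q_zone_le U hw hzz)
      have h2 : rk U w < N := hb_lt_of_lt (lt_of_lt_of_le hNb h1)
      have h3 : w ∈ Ff U N := Ff_mono U (le_of_lt h2) (rk_spec U hw.1)
      have h4 : d ≤ dist x w := Metric.infDist_le_dist_of_mem h3
      have h5 : dist z w ≤ (2⁻¹:ℝ)^(idx U w) := by
        refine le_trans (Zone_dist U hzz) ?_
        rw [sw]
        have h6 : min ((2⁻¹:ℝ) ^ (idx U w)) (isoR U w) ≤ (2⁻¹:ℝ) ^ (idx U w) := min_le_left _ _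
        have h7 : (0:ℝ) < (2⁻¹:ℝ) ^ (idx U w) := pow_pos (by norm_num) _
        linarith
      have h6 : d ≤ dist x z + dist z w := le_trans h4 (dist_triangle x z w)
      have h7 : dist x z < δ := by rwa [dist_comm]
      have h8 : d/2 ≤ (2⁻¹:ℝ)^(idx U w) := by
        have := le_trans hδc (le_refl (d/2))
        linarith
      have h9 : idx U w < I₀ := by
        by_contra hcon
        push_neg at hcon
        have := pow_le_pow_of_le_one (by norm_num : (0:ℝ) ≤ 2⁻¹) (by norm_num) hcon
        linarith
      have h10 := (exS U x hx hnz hε (idx U w)).choose_spec.2 w hw rfl z hzz hq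
      have h11 : δ ≤ (exS U x hx hnz hε (idx U w)).choose :=
        le_trans (hδR _ h9) (min_le_right _ _)
      linarith
    · -- carrier case
      have h1 : ε ≤ hb (mI (iT t)) := le_trans (hqz ▸ hq) (val_le t)
      have h2 : mI (iT t) < N := hb_lt_of_lt (lt_of_lt_of_le hNb h1)
      have hw : wT U t ∈ Ff U N :=
        Ff_mono U (le_of_lt h2) (Zs_subset U _ (wT_mem_Zs U ht))
      have h4 : d ≤ dist x (wT U t) := Metric.infDist_le_dist_of_mem hw
      have h5 : dist z (wT U t) ≤ (2⁻¹:ℝ)^(iT t) := by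
        have := (pk_spec U ht).1
        rw [hpz] at this
        rw [Metric.mem_ball] at this
        refine le_of_lt (lt_of_lt_of_le this ?_)
        rw [rad]
        exact min_le_left _ _
      have h6 : d ≤ dist x z + dist z (wT U t) := le_trans h4 (dist_triangle x z (wT U t))
      have h7 : dist x z < δ := by rwa [dist_comm]
      have h9 : iT t < I₀ := by
        by_contra hcon
        push_neg at hcon
        have := pow_le_pow_of_le_one (by norm_num : (0:ℝ) ≤ 2⁻¹) (by norm_num) hcon
        linarith
      have hteq : Nat.pair (iT t) (kT t) = t := Nat.pair_unpair t
      have h10 := (exC U x hx (iT t)).choose_spec.2 (kT t) (by rw [hteq]; exact ht)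
      rw [hteq, hpz] at h10
      have h11 : δ ≤ (exC U x hx (iT t)).choose :=
        le_trans (hδR _ h9) (min_le_left _ _)
      linarith
  · -- Ff U N empty : no structures of large height at all
    refine ⟨1, by norm_num, fun z hz => ?_⟩
    by_contra hq
    push_neg at hq
    rcases q_cases U z with h0 | ⟨w, hw, hzz, hqz⟩ | ⟨t, ht, hpz, hqz⟩
    · rw [h0] at hq; linarith
    · have h1 : ε ≤ hb (rk U w) := le_trans hq (q_zone_le U hw hzz)
      have h2 : rk U w < N := hb_lt_of_lt (lt_of_lt_of_le hNb h1)
      exact hFne ⟨w, Ff_mono U (le_of_lt h2) (rk_spec U hw.1)⟩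
    · have h1 : ε ≤ hb (mI (iT t)) := le_trans (hqz ▸ hq) (val_le t)
      have h2 : mI (iT t) < N := hb_lt_of_lt (lt_of_lt_of_le hNb h1)
      exact hFne ⟨wT U t, Ff_mono U (le_of_lt h2) (Zs_subset U _ (wT_mem_Zs U ht))⟩

theorem phi_contAt {t : ℝ} (ht : t ≠ 0) : ContinuousAt phi t := by
  have h1 : ContinuousAt (fun t : ℝ => Real.sin t⁻¹) t :=
    Real.continuous_sin.continuousAt.comp (continuousAt_inv₀ ht)
  have h2 : ContinuousAt (fun t : ℝ => (1 - t) * (1 + Real.sin t⁻¹) / 8) t := by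
    exact (((continuousAt_const.sub continuousAt_id).mul
      (continuousAt_const.add h1)).div_const 8)
  exact h2

theorem qcont (hU : ∀ n, IsOpen (U n)) {x : ℝ} (hx : x ∈ Gg U) : ContinuousAt (q U) x := by
  classical
  have hxD : x ∉ Dd U := by rw [Dd, Set.mem_compl_iff]; simpa using hx
  by_cases h1 : ∃ w, IsoP U w ∧ x ∈ Zone U w
  · obtain ⟨w, hw, hz⟩ := h1
    have hopen : IsOpen (Zone U w) := isOpen_Ioo
    have hev : ∀ᶠ z in 𝓝 x, q U z = hb (rk U w) * phi ((z - w) / sw U w) := by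
      filter_upwards [hopen.mem_nhds hz] with z hz'
      exact q_zone U hw hz'
    have hco : ContinuousAt (fun z => hb (rk U w) * phi ((z - w) / sw U w)) x := by
      have hf := zone_frac_mem U hz
      have hne : (x - w) / sw U w ≠ 0 := ne_of_gt hf.1
      have hfc : ContinuousAt (fun z : ℝ => (z - w) / sw U w) x :=
        (continuousAt_id.sub continuousAt_const).div_const _
      have : ContinuousAt (phi ∘ fun z : ℝ => (z - w) / sw U w) x :=
        ContinuousAt.comp (phi_contAt hne) hfc
      exact continuousAt_const.mul this
    exact hco.congr (hev.mono fun z hz' => hz'.symm)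
  · have hq0 : q U x = 0 := q_zero_of_G U hxD h1
    rw [Metric.continuousAt_iff]
    intro ε hε
    obtain ⟨δ, hδ, hδs⟩ := qsmall U hU x hxD h1 hε
    refine ⟨δ, hδ, fun {z} hz => ?_⟩
    rw [hq0, Real.dist_eq, sub_zero, abs_of_nonneg (q_nonneg U z)]
    exact hδs z hz

end Cont

section Osc

variable (U : ℕ → Set ℝ)

theorem phi_surj {c : ℝ} (hc1 : 0 < c) (hc2 : c ≤ 8⁻¹) {ε : ℝ} (hε : 0 < ε) :
    ∃ t : ℝ, 0 < t ∧ t < ε ∧ t < 1 ∧ phi t = c := by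
  have hπ := Real.pi_pos
  set π := Real.pi with hπdef
  obtain ⟨k, hk⟩ := exists_nat_gt ((1/ε + π/2 + 4) / (2*π))
  have hkpos : (0:ℝ) < k := by
    have h1 : (0:ℝ) < (1/ε + π/2 + 4) / (2*π) := by positivity
    linarith
  have hbig : 2*π*k - π/2 > max (1/ε) 4 := by
    have h2 : (1/ε + π/2 + 4) < 2*π*k := by
      rw [div_lt_iff₀ (by positivity)] at hk
      linarith
    have hεinv : (0:ℝ) < 1/ε := by positivity
    rw [gt_iff_lt, max_lt_iff]
    constructor
    · nlinarith
    · nlinarith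
  set A : ℝ := 2*π*k - π/2 with hA
  set B : ℝ := 2*π*k + π/2 with hB
  have hApos : 0 < A := by
    rw [hA]
    have := le_max_right (1/ε) 4
    have := lt_of_le_of_lt (le_max_right (1/ε) 4) hbig
    linarith
  have hBpos : 0 < B := by rw [hB]; nlinarith
  have hAB : A < B := by rw [hA, hB]; linarith
  set t₁ : ℝ := A⁻¹ with ht₁
  set t₂ : ℝ := B⁻¹ with ht₂
  have ht₁pos : 0 < t₁ := inv_pos.2 hApos
  have ht₂pos : 0 < t₂ := inv_pos.2 hBpos
  have ht21 : t₂ < t₁ := by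
    rw [ht₁, ht₂]
    exact inv_strictAnti₀ hApos hAB
  have ht₁small : t₁ < min ε 4⁻¹ := by
    rw [ht₁, lt_min_iff]
    constructor
    · have h1 : 1/ε < A := lt_of_le_of_lt (le_max_left _ _) hbig
      rw [inv_lt_comm₀ hApos hε, ← one_div]
      exact h1
    · have h4 : (4:ℝ) < A := lt_of_le_of_lt (le_max_right _ _) hbig
      have : t₁ < 4⁻¹ := by
        rw [ht₁]
        exact inv_strictAnti₀ (by norm_num) h4
      exact this
  have hsin1 : Real.sin t₁⁻¹ = -1 := by
    rw [ht₁, inv_inv, hA]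
    have : 2*π*k - π/2 = -(π/2) + (k:ℤ) * (2*π) := by push_cast; ring
    rw [this, Real.sin_add_int_mul_two_pi, Real.sin_neg, Real.sin_pi_div_two]
  have hsin2 : Real.sin t₂⁻¹ = 1 := by
    rw [ht₂, inv_inv, hB]
    have : 2*π*k + π/2 = (π/2) + (k:ℤ) * (2*π) := by push_cast; ring
    rw [this, Real.sin_add_int_mul_two_pi, Real.sin_pi_div_two]
  have hphi1 : phi t₁ = 0 := by rw [phi, hsin1]; ring
  have hphi2 : phi t₂ ≥ 3/16 := by
    rw [phi, hsin2]
    have ht₂lt : t₂ < 4⁻¹ := lt_trans ht21 (lt_of_lt_of_le ht₁small (min_le_right _ _))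
    have : 1 - t₂ ≥ 3/4 := by linarith
    nlinarith
  have hcont : ContinuousOn phi (Set.Icc t₂ t₁) := by
    intro t ht
    exact (phi_contAt (ne_of_gt (lt_of_lt_of_le ht₂pos ht.1))).continuousWithinAt
  have hmem : c ∈ Set.Icc (phi t₁) (phi t₂) := by
    rw [Set.mem_Icc, hphi1]
    exact ⟨le_of_lt hc1, by linarith⟩
  obtain ⟨t, htmem, htval⟩ := intermediate_value_Icc' (le_of_lt ht21) hcont hmem
  refine ⟨t, lt_of_lt_of_le ht₂pos htmem.1, ?_, ?_, htval⟩
  · exact lt_of_le_of_lt htmem.2 (lt_of_lt_of_le ht₁small (min_le_left _ _))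
  · have := lt_of_lt_of_le ht₁small (min_le_right _ _)
    have h4 : (4:ℝ)⁻¹ < 1 := by norm_num
    linarith [htmem.2]

theorem base_witness (m l : ℕ) (hne : (Zs U m).Nonempty) (j : ℕ) {δ : ℝ} (hδ : 0 < δ) :
    ∃ z : ℝ, dist z (en U m l) < δ ∧ q U z = hb m * hb (j+3) := by
  classical
  set i := Nat.pair m l with hi
  set w := en U m l with hw
  have hbWi : bW U i = w := by rw [bW, hi, mI, lI, Nat.unpair_pair]
  have hvB : validB U i := by rw [validB, hi, mI, Nat.unpair_pair]; exact hne
  have hwZ : w ∈ Zs U m := en_mem U m l hne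
  have hwF : w ∈ Ff U m := Zs_subset U m hwZ
  have hwD : w ∈ Dd U := Ff_subset_Dd U m hwF
  by_cases hiso : IsoP U w
  · -- sweep case
    have hrk : rk U w ≤ m := rk_min U hwF
    have hswp := sw_pos U w
    set c : ℝ := hb ((m - rk U w) + (j+3)) with hc
    have hcval : hb (rk U w) * c = hb m * hb (j+3) := by
      rw [hc, hb, hb, hb, hb, ← pow_add, ← pow_add]
      congr 1
      omega
    have hc1 : 0 < c := hb_pos _
    have hc2 : c ≤ 8⁻¹ := by
      have h1 : (3:ℕ) ≤ (m - rk U w) + (j+3) := by omega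
      have := hb_anti h1
      rw [hc]
      refine le_trans this ?_
      rw [hb]
      norm_num
    have hεp : 0 < δ / sw U w := div_pos hδ hswp
    obtain ⟨t, ht0, htε, ht1, htval⟩ := phi_surj hc1 hc2 hεp
    set z := w + sw U w * t with hz
    have hzZone : z ∈ Zone U w := by
      constructor
      · rw [hz]; nlinarith
      · rw [hz]; nlinarith
    refine ⟨z, ?_, ?_⟩
    · rw [hz, Real.dist_eq]
      have : w + sw U w * t - w = sw U w * t := by ring
      rw [this, abs_of_nonneg (by nlinarith)]
      calc sw U w * t < sw U w * (δ / sw U w) := by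
            exact mul_lt_mul_of_pos_left htε hswp
        _ = δ := by field_simp
    · rw [q_zone U hiso hzZone]
      have hfrac : (z - w) / sw U w = t := by
        rw [hz]
        field_simp
        ring
      rw [hfrac, htval, hcval]
  · -- carrier case
    obtain ⟨a, ha⟩ := exists_pow_lt_of_lt_one hδ (by norm_num : (2⁻¹:ℝ) < 1)
    set tsl := Nat.pair i (Nat.pair a j) with htsl
    have hiT : iT tsl = i := by rw [iT, htsl, Nat.unpair_pair]
    have hkT : kT tsl = Nat.pair a j := by rw [kT, htsl, Nat.unpair_pair]
    have hwT : wT U tsl = w := by rw [wT, hiT, hbWi]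
    have hvC : validC U tsl := by
      rw [validC, hiT, hwT]
      exact ⟨hvB, hiso⟩
    refine ⟨pk U tsl, ?_, ?_⟩
    · have h1 := (pk_spec U hvC).1
      rw [Metric.mem_ball, hwT] at h1
      refine lt_of_lt_of_le (lt_of_lt_of_le h1 ?_) (le_of_lt ha)
      rw [rad, hkT]
      refine le_trans (min_le_right _ _) ?_
      exact pow_le_pow_of_le_one (by norm_num) (by norm_num) (Nat.left_le_pair a j)
    · rw [q_carrier U hvC, val, hiT, hkT, Nat.unpair_pair]
      simp [mI, hi, Nat.unpair_pair]

theorem qosc {x : ℝ} (hx : x ∈ Dd U) :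
    ∃ h : ℝ, 0 < h ∧ ∀ j : ℕ, ∀ δ : ℝ, 0 < δ →
      ∃ z, dist z x < δ ∧ q U z = h * hb (j+3) := by
  classical
  by_cases hA : ∃ m, x ∈ closure (Ff U m \ {x})
  · obtain ⟨m, hm⟩ := hA
    refine ⟨hb m, hb_pos m, fun j δ hδ => ?_⟩
    obtain ⟨y, hy, hyd⟩ := Metric.mem_closure_iff.1 hm (δ/4) (by linarith)
    have hyF : y ∈ Ff U m := hy.1
    have hyZ : y ∈ closure (Zs U m) := Zs_dense U m hyF
    obtain ⟨v, hv, hvd⟩ := Metric.mem_closure_iff.1 hyZ (δ/4) (by linarith)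
    have hne : (Zs U m).Nonempty := ⟨v, hv⟩
    obtain ⟨l, hl⟩ := en_surj U m hne hv
    obtain ⟨z, hz1, hz2⟩ := base_witness U m l hne j (show (0:ℝ) < δ/2 by linarith)
    refine ⟨z, ?_, hz2⟩
    rw [hl] at hz1
    have d1 : dist z x ≤ dist z v + dist v y + dist y x := dist_triangle4 z v y x
    rw [dist_comm v y] at d1
    rw [dist_comm x y] at hyd
    linarith
  · push_neg at hA
    set m₀ := rk U x with hm₀
    have hxF : x ∈ Ff U m₀ := rk_spec U hx
    have hxZ : x ∈ Zs U m₀ := by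
      by_contra hnz
      refine (hA m₀) ?_
      have hxc : x ∈ closure (Zs U m₀) := Zs_dense U m₀ hxF
      rw [Metric.mem_closure_iff] at hxc ⊢
      intro ε hε
      obtain ⟨v, hv, hvd⟩ := hxc ε hε
      refine ⟨v, ⟨Zs_subset U m₀ hv, ?_⟩, hvd⟩
      intro hvx
      rw [Set.mem_singleton_iff] at hvx
      exact hnz (hvx ▸ hv)
    have hne : (Zs U m₀).Nonempty := ⟨x, hxZ⟩
    obtain ⟨l, hl⟩ := en_surj U m₀ hne hxZ
    refine ⟨hb m₀, hb_pos m₀, fun j δ hδ => ?_⟩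
    obtain ⟨z, hz1, hz2⟩ := base_witness U m₀ l hne j hδ
    rw [hl] at hz1
    exact ⟨z, hz1, hz2⟩

end Osc

section Assembly

theorem hb_tendsto : Tendsto (fun j : ℕ => hb (j+3)) atTop (𝓝 0) := by
  have h1 : Tendsto (fun j : ℕ => (2⁻¹:ℝ) ^ j) atTop (𝓝 0) :=
    tendsto_pow_atTop_nhds_zero_of_lt_one (by norm_num) (by norm_num)
  exact h1.comp (tendsto_add_atTop_nat 3)

theorem assembly (Q : ℝ → ℝ) (G : Set ℝ)
    (hcont : ∀ x ∈ G, ContinuousAt Q x)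
    (hosc : ∀ x ∉ G, ∃ hgt : ℝ, 0 < hgt ∧ ∀ j : ℕ, ∀ δ : ℝ, 0 < δ →
      ∃ z, dist z x < δ ∧ Q z = hgt * hb (j+3))
    (v : ℕ → ℝ) (hv0 : ∀ j, v j ≠ 0) (hvlim : Tendsto v atTop (𝓝 0))
    (hval : ∀ j, ∃ z, Q z = v j) :
    Lineable (ContinuityClass G) Cardinal.continuum := by
  classical
  set f : ℝ → (ℝ → ℝ) := fun b z => Real.exp (Real.exp b * Q z) with hf
  have hrep : ∀ c : ℝ →₀ ℝ, ∀ z : ℝ,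
      (c.sum fun b r => r • f b) z = ∑ b ∈ c.support, c b * Real.exp (Real.exp b * Q z) := by
    intro c z
    rw [Finsupp.sum, Finset.sum_apply]
    exact Finset.sum_congr rfl fun b _ => by simp [hf]
  -- linear independence
  have hindep : LinearIndependent ℝ f := by
    rw [linearIndependent_iff]
    intro l hl
    by_contra hlne
    have hsupp : ∃ b ∈ l.support, l b ≠ 0 := by
      obtain ⟨b, hb⟩ := Finsupp.ne_iff.1 hlne
      exact ⟨b, Finsupp.mem_support_iff.2 (by simpa using hb), by simpa using hb⟩
    obtain ⟨j, k, hjk⟩ := expsum_two_values l.support l hsupp v hv0 hvlim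
    have hz : ∀ j' : ℕ, ∑ b ∈ l.support, l b * Real.exp (Real.exp b * v j') = 0 := by
      intro j'
      obtain ⟨z, hz⟩ := hval j'
      have h1 : (l.sum fun b r => r • f b) z = 0 := by
        rw [← Finsupp.linearCombination_apply] at *
        rw [hl]
        rfl
      rw [hrep l z, hz] at h1
      exact h1
    rw [hz j, hz k] at hjk
    exact hjk rfl
  -- each nonzero combo is in the continuity class
  have hclass : ∀ c : ℝ →₀ ℝ, c.support.Nonempty →
      (c.sum fun b r => r • f b) ∈ ContinuityClass G := by
    intro c hc
    set F : ℝ → ℝ := c.sum fun b r => r • f b with hF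
    have hFeq : ∀ z, F z = ∑ b ∈ c.support, c b * Real.exp (Real.exp b * Q z) := hrep c
    have hEcont : Continuous (fun s : ℝ => ∑ b ∈ c.support, c b * Real.exp (Real.exp b * s)) := by
      refine continuous_finset_sum _ fun b _ => ?_
      exact continuous_const.mul (Real.continuous_exp.comp (continuous_const.mul continuous_id))
    rw [ContinuityClass, Set.mem_setOf_eq]
    ext x
    simp only [Set.mem_setOf_eq]
    constructor
    · -- if F is continuous at x then x ∈ G
      intro hFx
      by_contra hxG
      obtain ⟨hgt, hhgt, hosc'⟩ := hosc x hxG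
      have hvx0 : ∀ j : ℕ, hgt * hb (j+3) ≠ 0 :=
        fun j => ne_of_gt (mul_pos hhgt (hb_pos _))
      have hvxlim : Tendsto (fun j : ℕ => hgt * hb (j+3)) atTop (𝓝 0) := by
        have := hb_tendsto.const_mul hgt
        simpa using this
      have hsupp : ∃ b ∈ c.support, c b ≠ 0 :=
        ⟨hc.choose, hc.choose_spec, Finsupp.mem_support_iff.1 hc.choose_spec⟩
      obtain ⟨j, k, hjk⟩ := expsum_two_values c.support c hsupp _ hvx0 hvxlim
      set Ej := ∑ b ∈ c.support, c b * Real.exp (Real.exp b * (hgt * hb (j+3))) with hEj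
      set Ek := ∑ b ∈ c.support, c b * Real.exp (Real.exp b * (hgt * hb (k+3))) with hEk
      set ε₀ := dist Ej Ek with hε₀
      have hε₀pos : 0 < ε₀ := dist_pos.2 hjk
      rw [Metric.continuousAt_iff] at hFx
      obtain ⟨δ, hδ, hδs⟩ := hFx (ε₀/2) (by linarith)
      obtain ⟨z₁, hz₁d, hz₁v⟩ := hosc' j δ hδ
      obtain ⟨z₂, hz₂d, hz₂v⟩ := hosc' k δ hδ
      have hFz₁ : F z₁ = Ej := by rw [hFeq z₁, hz₁v]
      have hFz₂ : F z₂ = Ek := by rw [hFeq z₂, hz₂v]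
      have h1 : dist (F z₁) (F x) < ε₀/2 := hδs hz₁d
      have h2 : dist (F z₂) (F x) < ε₀/2 := hδs hz₂d
      have h3 : dist Ej Ek ≤ dist (F z₁) (F x) + dist (F z₂) (F x) := by
        rw [← hFz₁, ← hFz₂]
        exact dist_triangle_right _ _ _
      linarith
    · -- if x ∈ G then F is continuous at x
      intro hxG
      have h1 : ContinuousAt (fun z =>
          ∑ b ∈ c.support, c b * Real.exp (Real.exp b * Q z)) x :=
        (hEcont.continuousAt).comp (hcont x hxG)
      exact h1.congr (Eventually.of_forall fun z => (hFeq z).symm)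
  refine ⟨Submodule.span ℝ (Set.range f), ?_, ?_⟩
  · rw [rank_span hindep, Cardinal.mk_range_eq f hindep.injective, Cardinal.mk_real]
  · intro g hg
    obtain ⟨c, hcg⟩ := Finsupp.mem_span_range_iff_exists_finsupp.1 hg
    rcases Finset.eq_empty_or_nonempty c.support with hce | hcne
    · right
      rw [Set.mem_singleton_iff, ← hcg]
      rw [Finsupp.sum, hce]
      simp
    · left
      rw [← hcg]
      exact hclass c hcne

theorem main1 : Lineable (ContinuityClass (Set.univ : Set ℝ)) Cardinal.continuum := by
  refine assembly id Set.univ (fun x _ => continuousAt_id)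
    (fun x hx => absurd (Set.mem_univ x) hx)
    (fun j => hb (j+3)) (fun j => ne_of_gt (hb_pos _)) hb_tendsto
    (fun j => ⟨hb (j+3), rfl⟩)

theorem main2 (U : ℕ → Set ℝ) (hU : ∀ n, IsOpen (U n)) (hD : (Dd U).Nonempty) :
    Lineable (ContinuityClass (Gg U)) Cardinal.continuum := by
  obtain ⟨x₀, hx₀⟩ := hD
  obtain ⟨hgt, hhgt, hosc₀⟩ := qosc U hx₀
  refine assembly (q U) (Gg U) (fun x hx => qcont U hU hx) ?_
    (fun j => hgt * hb (j+3)) (fun j => ne_of_gt (mul_pos hhgt (hb_pos _)))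
    (by simpa using hb_tendsto.const_mul hgt) ?_
  · intro x hx
    have hxD : x ∈ Dd U := by rwa [Dd, Set.mem_compl_iff]
    exact qosc U hxD
  · intro j
    obtain ⟨z, _, hz⟩ := hosc₀ j 1 one_pos
    exact ⟨z, hz⟩

end Assembly
end S18

/-- If `G ⊆ ℝ` is a `Gδ` set such that `ℝ \ G` is not `𝔠`-dense in itself,
then `C_G` is `𝔠`-lineable. -/
theorem stmt18 (G : Set ℝ) (hG : IsGδ G) (h : ¬ CDenseInItself Gᶜ) :
    Lineable (ContinuityClass G) Cardinal.continuum := by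
  obtain ⟨T, hTopen, hTct, hGeq⟩ := hG
  rcases Set.eq_empty_or_nonempty Gᶜ with hc | hc
  · have hGuniv : G = Set.univ := by rwa [Set.compl_empty_iff] at hc
    rw [hGuniv]
    exact S18.main1
  · have hTne : T.Nonempty := by
      rcases Set.eq_empty_or_nonempty T with hT | hT
      · exfalso
        rw [hT, Set.sInter_empty] at hGeq
        rw [hGeq] at hc
        simp at hc
      · exact hT
    obtain ⟨U, hU⟩ := hTct.exists_eq_range hTne
    have hGg : G = S18.Gg U := by
      rw [hGeq, hU, Set.sInter_range, S18.Gg]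
    have hUopen : ∀ n, IsOpen (U n) := fun n =>
      hTopen (U n) (by rw [hU]; exact Set.mem_range_self n)
    have hD : (S18.Dd U).Nonempty := by
      rw [S18.Dd, S18.Gg, ← S18.Gg, ← hGg]
      exact hc
    rw [hGg]
    exact S18.main2 U hUopen hD
end

section
/- The set of all functions f : ℝ → ℝ such that f is continuous at no point of ℝ, f maps every connected subset of ℝ onto a connected set (f is Darboux), and f maps every uncountable compact subset of ℝ onto a compact set, is strongly 2^𝔠-algebrable in the algebra ℝ^ℝ, where 𝔠 is the cardinality of the continuum. -/
open Cardinal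

namespace Stmt19

open Set


lemma poly_zero_of_vanish_box : ∀ (n : ℕ) (P : MvPolynomial (Fin n) ℝ),
    (∀ v : Fin n → ℝ, (∀ i, v i ∈ Set.Icc (1:ℝ) 2) → MvPolynomial.eval v P = 0) → P = 0 := by
  intro n
  induction n with
  | zero =>
    intro P h
    obtain ⟨a, rfl⟩ := MvPolynomial.C_surjective (Fin 0) P
    have := h (fun _ => 1) (fun i => i.elim0)
    simpa using this
  | succ n ih =>
    intro P h
    set Q := MvPolynomial.finSuccEquiv ℝ n P with hQdef
    have hc : ∀ k, Q.coeff k = 0 := by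
      intro k
      apply ih
      intro v hv
      have huniv : Q.map (MvPolynomial.eval v) = 0 := by
        apply Polynomial.eq_zero_of_infinite_isRoot
        apply (Set.Icc_infinite (show (1:ℝ) < 2 by norm_num)).mono
        intro y hy
        simp only [Set.mem_setOf_eq, Polynomial.IsRoot]
        rw [← MvPolynomial.eval_eq_eval_mv_eval']
        refine h (Fin.cons y v) ?_
        intro i
        refine Fin.cases ?_ ?_ i
        · simpa using hy
        · intro j; simpa using hv j
      have := congrArg (fun p => Polynomial.coeff p k) huniv
      simpa [Polynomial.coeff_map] using this
    have hQ0 : Q = 0 := Polynomial.ext fun k => by simp [hc k]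
    exact (MvPolynomial.finSuccEquiv ℝ n).injective (by rw [map_zero, ← hQdef, hQ0])

lemma exists_ne_on_box {n : ℕ} (P : MvPolynomial (Fin n) ℝ) (hP : P ≠ 0)
    (h0 : MvPolynomial.constantCoeff P = 0) :
    ∃ v w : Fin n → ℝ, (∀ i, v i ∈ Set.Icc (1:ℝ) 2) ∧ (∀ i, w i ∈ Set.Icc (1:ℝ) 2) ∧
      MvPolynomial.eval v P ≠ MvPolynomial.eval w P := by
  by_contra hcon
  push_neg at hcon
  set c := MvPolynomial.eval (fun _ : Fin n => (1:ℝ)) P with hc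
  have h1 : ∀ i : Fin n, (fun _ : Fin n => (1:ℝ)) i ∈ Set.Icc (1:ℝ) 2 := by
    intro i; exact ⟨le_refl 1, one_le_two⟩
  have hall : ∀ v : Fin n → ℝ, (∀ i, v i ∈ Set.Icc (1:ℝ) 2) → MvPolynomial.eval v P = c :=
    fun v hv => hcon v _ hv h1
  have hsub : P - MvPolynomial.C c = 0 := by
    apply poly_zero_of_vanish_box
    intro v hv
    simp [hall v hv]
  have hPc : P = MvPolynomial.C c := sub_eq_zero.mp hsub
  have hc0 : c = 0 := by simpa [hPc] using h0
  exact hP (by simp [hPc, hc0])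



lemma continuum_le_mk_of_compact_uncountable {K : Set ℝ} (hK : IsCompact K)
    (hunc : ¬K.Countable) : 𝔠 ≤ #K := by
  obtain ⟨f, hfr, -, hinj⟩ := hK.isClosed.exists_nat_bool_injection_of_not_countable hunc
  have h1 : #(ℕ → Bool) ≤ #K := by
    refine mk_le_of_injective (f := fun x => (⟨f x, hfr ⟨x, rfl⟩⟩ : K)) ?_
    intro a b hab
    exact hinj (congrArg Subtype.val hab)
  have h2 : #(ℕ → Bool) = 𝔠 := by
    rw [← Cardinal.power_def, Cardinal.mk_bool, Cardinal.mk_nat, Cardinal.two_power_aleph0]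
  rwa [h2] at h1

lemma not_countable_Icc {a b : ℝ} (h : a < b) : ¬(Set.Icc a b).Countable := by
  intro hc
  have := hc.le_aleph0
  rw [Cardinal.mk_Icc_real h] at this
  exact Cardinal.aleph0_lt_continuum.not_ge this

lemma mk_closeds_le : #{K : Set ℝ // IsClosed K} ≤ 𝔠 := by
  have key : ∀ K : {K : Set ℝ // IsClosed K},
      K.1ᶜ = ⋃ q ∈ {q : ℚ × ℚ | Set.Ioo (q.1 : ℝ) q.2 ⊆ K.1ᶜ}, Set.Ioo (q.1 : ℝ) q.2 := by
    intro K
    ext x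
    simp only [Set.mem_iUnion, Set.mem_setOf_eq, exists_prop]
    constructor
    · intro hx
      obtain ⟨ε, hε, hball⟩ := Metric.isOpen_iff.1 K.2.isOpen_compl x hx
      rw [Real.ball_eq_Ioo] at hball
      obtain ⟨q1, hq1, hq1'⟩ := exists_rat_btwn (show x - ε < x by linarith)
      obtain ⟨q2, hq2, hq2'⟩ := exists_rat_btwn (show x < x + ε by linarith)
      refine ⟨(q1, q2), ?_, hq1', hq2⟩
      intro y hy
      exact hball ⟨by exact lt_trans hq1 hy.1, lt_trans hy.2 hq2'⟩
    · rintro ⟨q, hq, hxq⟩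
      exact hq hxq
  have hinj : Function.Injective (fun K : {K : Set ℝ // IsClosed K} =>
      ({q : ℚ × ℚ | Set.Ioo (q.1 : ℝ) q.2 ⊆ K.1ᶜ} : Set (ℚ × ℚ))) := by
    intro K K' h
    apply Subtype.ext
    rw [← compl_compl K.1, ← compl_compl K'.1, key K, key K']
    simp only at h
    rw [h]
  calc #{K : Set ℝ // IsClosed K} ≤ #(Set (ℚ × ℚ)) := mk_le_of_injective hinj
    _ = 2 ^ ℵ₀ := by rw [Cardinal.mk_set, Cardinal.mk_eq_aleph0]
    _ = 𝔠 := Cardinal.two_power_aleph0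

abbrev OT : Type := (Cardinal.ord Cardinal.continuum).ToType

lemma exists_injective_choice {J : Type} [Nonempty J] (S : J → Set ℝ) (hJ : #J ≤ 𝔠)
    (hS : ∀ j, 𝔠 ≤ #(S j)) :
    ∃ h : J → ℝ, Function.Injective h ∧ ∀ j, h j ∈ S j := by
  obtain ⟨e⟩ : Nonempty (J ↪ OT) := by
    rw [← Cardinal.mk_ord_toType Cardinal.continuum] at hJ
    rwa [Cardinal.le_def] at hJ
  set S' : OT → Set ℝ := fun o => S (Function.invFun e o) with hS'def
  have hS' : ∀ o, 𝔠 ≤ #(S' o) := fun o => hS _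
  have hseg : ∀ o : OT, #(Set.Iio o) < 𝔠 := fun o => Cardinal.mk_Iio_ord_toType o
  have key : ∀ (o : OT) (prev : (Set.Iio o) → ℝ), (S' o \ Set.range prev).Nonempty := by
    intro o prev
    rw [Set.nonempty_iff_ne_empty]
    intro hempty
    have hsub : S' o ⊆ Set.range prev := Set.diff_eq_empty.mp hempty
    have hle : #(S' o) ≤ #(Set.Iio o) :=
      (Cardinal.mk_le_mk_of_subset hsub).trans Cardinal.mk_range_le
    exact absurd ((hS' o).trans hle) (not_le.2 (hseg o))
  let F : OT → ℝ := IsWellFounded.fix (· < ·)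
    (fun o ih => (key o (fun p => ih p.1 p.2)).some)
  have hF : ∀ o : OT, F o = (key o (fun p : (Set.Iio o) => F p.1)).some := fun o =>
    IsWellFounded.fix_eq _ _ o
  have hFmem : ∀ o, F o ∈ S' o \ Set.range (fun p : (Set.Iio o) => F p.1) := by
    intro o
    rw [hF o]
    exact (key o _).some_mem
  have hFinj : Function.Injective F := by
    intro a b hab
    by_contra hne
    rcases lt_or_gt_of_ne hne with h | h
    · exact (hFmem b).2 ⟨⟨a, h⟩, hab⟩
    · exact (hFmem a).2 ⟨⟨b, h⟩, hab.symm⟩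
  refine ⟨F ∘ e, hFinj.comp e.injective, ?_⟩
  intro j
  have hmem := (hFmem (e j)).1
  have h2 : Function.invFun (⇑e) (e j) = j := Function.leftInverse_invFun e.injective j
  show F (e j) ∈ S j
  rw [hS'def] at hmem
  simp only at hmem
  rwa [h2] at hmem



def D : Type := (s : Finset ℝ) × (↥s.powerset → ℝ)
instance : Nonempty D := ⟨⟨∅, fun _ => 1⟩⟩

lemma mk_D_le : #D ≤ 𝔠 := by
  have hfib : ∀ s : Finset ℝ, #(↥s.powerset → ℝ) ≤ 𝔠 := by
    intro s
    rw [← Cardinal.power_def, Cardinal.mk_real, Cardinal.mk_fintype]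
    exact Cardinal.power_nat_le Cardinal.aleph0_le_continuum
  calc #D = Cardinal.sum (fun s : Finset ℝ => #(↥s.powerset → ℝ)) := Cardinal.mk_sigma _
    _ ≤ Cardinal.sum (fun _ : Finset ℝ => 𝔠) := Cardinal.sum_le_sum _ _ hfib
    _ = #(Finset ℝ) * 𝔠 := Cardinal.sum_const' _ _
    _ = 𝔠 * 𝔠 := by rw [Cardinal.mk_finset_of_infinite, Cardinal.mk_real]
    _ = 𝔠 := Cardinal.mul_eq_self Cardinal.aleph0_le_continuum


def UC : Type := {K : Set ℝ // IsCompact K ∧ ¬K.Countable}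


instance : Nonempty UC := ⟨⟨Set.Icc 0 1, isCompact_Icc, not_countable_Icc one_pos⟩⟩

lemma mk_UC_le : #UC ≤ 𝔠 := by
  refine le_trans (Cardinal.mk_le_of_injective (f := fun K : UC =>
    (⟨K.1, K.2.1.isClosed⟩ : {K : Set ℝ // IsClosed K})) ?_) mk_closeds_le
  intro a b hab
  have h1 : a.1 = b.1 := by simpa [Subtype.ext_iff] using hab
  exact Subtype.ext h1

noncomputable def flt (X : Set ℝ) (s : Finset ℝ) : Finset ℝ :=
  letI : DecidablePred (· ∈ X) := fun _ => Classical.dec _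
  s.filter (· ∈ X)

lemma mem_flt {X : Set ℝ} {s : Finset ℝ} {r : ℝ} : r ∈ flt X s ↔ r ∈ s ∧ r ∈ X := by
  classical
  simp [flt, Finset.mem_filter]

lemma flt_subset (X : Set ℝ) (s : Finset ℝ) : flt X s ⊆ s := fun r hr => (mem_flt.1 hr).1

noncomputable def G (X : Set ℝ) (d : D) : ℝ :=
  d.2 ⟨flt X d.1, Finset.mem_powerset.2 (flt_subset X d.1)⟩

noncomputable def clamp (y : ℝ) : ℝ := max 1 (min 2 y)

lemma clamp_mem (y : ℝ) : clamp y ∈ Set.Icc (1:ℝ) 2 :=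
  ⟨le_max_left _ _, max_le one_le_two (min_le_left _ _)⟩

lemma clamp_eq {y : ℝ} (hy : y ∈ Set.Icc (1:ℝ) 2) : clamp y = y := by
  rw [clamp, min_eq_right hy.2, max_eq_right hy.1]

-- master injection
def J : Type := UC × D
instance : Nonempty J := by unfold J; infer_instance

lemma exists_h : ∃ h : J → ℝ, Function.Injective h ∧ ∀ j : J, h j ∈ j.1.1 := by
  apply exists_injective_choice (S := fun j : J => j.1.1)
  · have : #J = #UC * #D := by
      rw [show J = (UC × D) from rfl]
      simpa using Cardinal.mk_prod UC D
    rw [this]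
    calc #UC * #D ≤ 𝔠 * 𝔠 := mul_le_mul' mk_UC_le mk_D_le
      _ = 𝔠 := Cardinal.mul_eq_self Cardinal.aleph0_le_continuum
  · exact fun j => continuum_le_mk_of_compact_uncountable j.1.2.1 j.1.2.2

noncomputable def h : J → ℝ := exists_h.choose
lemma h_inj : Function.Injective h := exists_h.choose_spec.1
lemma h_mem : ∀ j : J, h j ∈ j.1.1 := exists_h.choose_spec.2

noncomputable def ψ (x : ℝ) : D := (Function.invFun h x).2
noncomputable def f (X : Set ℝ) (x : ℝ) : ℝ := clamp (G X (ψ x))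
lemma f_mem_Icc (X : Set ℝ) (x : ℝ) : f X x ∈ Set.Icc (1:ℝ) 2 := clamp_mem _

lemma key_surj {n : ℕ} (ξ : Fin n → Set ℝ) (hξ : Function.Injective ξ)
    {K : Set ℝ} (hK : IsCompact K) (hKc : ¬K.Countable)
    (v : Fin n → ℝ) (hv : ∀ i, v i ∈ Set.Icc (1:ℝ) 2) :
    ∃ x ∈ K, ∀ i, f (ξ i) x = v i := by
  classical
  have hsep : ∀ i j : Fin n, i ≠ j → ∃ r : ℝ, ¬(r ∈ ξ i ↔ r ∈ ξ j) := by
    intro i j hij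
    by_contra hcon
    push_neg at hcon
    exact hij (hξ (Set.ext fun r => hcon r))
  let r : Fin n → Fin n → ℝ := fun i j => if hij : i ≠ j then (hsep i j hij).choose else 0
  let s : Finset ℝ := Finset.image (fun p : Fin n × Fin n => r p.1 p.2) Finset.univ
  let τ : Fin n → ↥s.powerset := fun i => ⟨flt (ξ i) s, Finset.mem_powerset.2 (flt_subset _ _)⟩
  have hτ : Function.Injective τ := by
    intro i j hij2
    by_contra hne
    have hrs : r i j ∈ s := Finset.mem_image.2 ⟨(i, j), Finset.mem_univ _, rfl⟩
    have hreq : r i j = (hsep i j hne).choose := dif_pos hne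
    refine (hreq ▸ (hsep i j hne).choose_spec) ?_
    have hval : flt (ξ i) s = flt (ξ j) s := by
      simpa [τ, Subtype.ext_iff] using hij2
    constructor
    · intro hmi
      have h3 : r i j ∈ flt (ξ i) s := mem_flt.2 ⟨hrs, hmi⟩
      rw [hval] at h3
      exact (mem_flt.1 h3).2
    · intro hmj
      have h3 : r i j ∈ flt (ξ j) s := mem_flt.2 ⟨hrs, hmj⟩
      rw [← hval] at h3
      exact (mem_flt.1 h3).2
  let g : ↥s.powerset → ℝ := Function.extend τ v (fun _ => 1)
  let d : D := ⟨s, g⟩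
  let jj : J := (⟨K, hK, hKc⟩, d)
  refine ⟨h jj, h_mem jj, ?_⟩
  intro i
  have hψ : ψ (h jj) = d := by
    show (Function.invFun h (h jj)).2 = d
    rw [Function.leftInverse_invFun h_inj jj]
  show clamp (G (ξ i) (ψ (h jj))) = v i
  rw [hψ]
  have hGd : G (ξ i) d = g (τ i) := rfl
  rw [hGd]
  show clamp (Function.extend τ v (fun _ => 1) (τ i)) = v i
  rw [hτ.extend_apply]
  exact clamp_eq (hv i)

def E : Set (ℝ → ℝ) :=
  {f : ℝ → ℝ | (∀ x : ℝ, ¬ContinuousAt f x) ∧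
    (∀ C : Set ℝ, IsPreconnected C → IsPreconnected (f '' C)) ∧
    ∀ K : Set ℝ, IsCompact K → ¬ K.Countable → IsCompact (f '' K)}

lemma aeval_pi_apply {n : ℕ} (P : MvPolynomial (Fin n) ℝ) (F : Fin n → ℝ → ℝ) (x : ℝ) :
    (MvPolynomial.aeval F P : ℝ → ℝ) x = MvPolynomial.eval (fun i => F i x) P := by
  induction P using MvPolynomial.induction_on with
  | C a => simp [MvPolynomial.algebraMap_eq]
  | add p q hp hq => simp [hp, hq]
  | mul_X p i hp => simp [hp]

lemma master {n : ℕ} (P : MvPolynomial (Fin n) ℝ) (hP : P ≠ 0)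
    (h0 : MvPolynomial.constantCoeff P = 0)
    (ξ : Fin n → Set ℝ) (hξ : Function.Injective ξ) :
    MvPolynomial.aeval (fun i => f (ξ i)) P ≠ 0 ∧
    MvPolynomial.aeval (fun i => f (ξ i)) P ∈ E := by
  set gf : ℝ → ℝ := MvPolynomial.aeval (fun i => f (ξ i)) P with hgfdef
  have hgf : ∀ x, gf x = MvPolynomial.eval (fun i => f (ξ i) x) P :=
    fun x => aeval_pi_apply P _ x
  set box : Set (Fin n → ℝ) := Set.univ.pi (fun _ => Set.Icc (1:ℝ) 2) with hbox
  set T : Set ℝ := (fun w => MvPolynomial.eval w P) '' box with hT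
  have ha_mem : ∀ x, gf x ∈ T := fun x =>
    ⟨fun i => f (ξ i) x, fun i _ => f_mem_Icc _ _, (hgf x).symm⟩
  have himg : ∀ K : Set ℝ, IsCompact K → ¬K.Countable → gf '' K = T := by
    intro K hK hKc
    apply Set.Subset.antisymm
    · rintro y ⟨x, -, rfl⟩
      exact ha_mem x
    · rintro y ⟨w, hw, rfl⟩
      obtain ⟨x, hxK, hfx⟩ := key_surj ξ hξ hK hKc w (fun i => hw i (Set.mem_univ i))
      refine ⟨x, hxK, ?_⟩
      rw [hgf x]
      have hfw : (fun i => f (ξ i) x) = w := funext hfx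
      rw [hfw]
  have hTcompact : IsCompact T :=
    (isCompact_univ_pi fun _ => isCompact_Icc).image (MvPolynomial.continuous_eval P)
  have hTconn : IsPreconnected T :=
    (isPreconnected_univ_pi fun _ => isPreconnected_Icc).image _
      (MvPolynomial.continuous_eval P).continuousOn
  obtain ⟨v, w, hv, hw, hvw⟩ := exists_ne_on_box P hP h0
  have hvT : MvPolynomial.eval v P ∈ T := ⟨v, fun i _ => hv i, rfl⟩
  have hwT : MvPolynomial.eval w P ∈ T := ⟨w, fun i _ => hw i, rfl⟩
  refine ⟨?_, ?_, ?_, ?_⟩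
  -- nonzero
  · intro hz
    have hz' : ∀ y ∈ T, y = 0 := by
      intro y hy
      rw [← himg (Set.Icc 0 1) isCompact_Icc (not_countable_Icc one_pos)] at hy
      obtain ⟨x, -, rfl⟩ := hy
      exact congrFun hz x
    exact hvw ((hz' _ hvT).trans (hz' _ hwT).symm)
  -- nowhere continuous
  · intro x0 hc
    set a := MvPolynomial.eval v P
    set b := MvPolynomial.eval w P
    have hab : 0 < |a - b| := abs_pos.2 (sub_ne_zero.2 hvw)
    obtain ⟨δ, hδ, hball⟩ := Metric.continuousAt_iff.1 hc (|a - b| / 2) (by linarith)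
    have hKδ := himg (Set.Icc x0 (x0 + δ / 2)) isCompact_Icc
      (not_countable_Icc (by linarith))
    have hmem : ∀ y ∈ T, ∃ x ∈ Set.Icc x0 (x0 + δ / 2), gf x = y := by
      intro y hy
      rw [← hKδ] at hy
      obtain ⟨x, hx, rfl⟩ := hy
      exact ⟨x, hx, rfl⟩
    obtain ⟨xa, hxa, hga⟩ := hmem a hvT
    obtain ⟨xb, hxb, hgb⟩ := hmem b hwT
    have hda : dist (gf xa) (gf x0) < |a - b| / 2 := by
      apply hball
      rw [Real.dist_eq]
      rw [Set.mem_Icc] at hxa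
      rw [abs_lt]
      constructor <;> linarith [hxa.1, hxa.2]
    have hdb : dist (gf xb) (gf x0) < |a - b| / 2 := by
      apply hball
      rw [Real.dist_eq]
      rw [Set.mem_Icc] at hxb
      rw [abs_lt]
      constructor <;> linarith [hxb.1, hxb.2]
    rw [hga, Real.dist_eq] at hda
    rw [hgb, Real.dist_eq] at hdb
    have : |a - b| ≤ |a - gf x0| + |b - gf x0| := by
      have := abs_sub_abs_le_abs_sub (a - gf x0) (b - gf x0)
      calc |a - b| = |(a - gf x0) - (b - gf x0)| := by ring_nf
        _ ≤ |a - gf x0| + |b - gf x0| := abs_sub _ _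
    linarith
  -- Darboux
  · intro C hC
    by_cases hsub : C.Subsingleton
    · exact ((hsub.image gf).isPreconnected)
    · rw [Set.not_subsingleton_iff] at hsub
      obtain ⟨p, hp, q, hq, hpq⟩ := hsub
      have hicc : ∀ a b : ℝ, a ∈ C → b ∈ C → a < b → gf '' C = T := by
        intro a b haC hbC hab2
        apply Set.Subset.antisymm
        · rintro y ⟨x, -, rfl⟩
          exact ha_mem x
        · have h1 : Set.Icc a b ⊆ C := hC.ordConnected.out haC hbC
          rw [← himg (Set.Icc a b) isCompact_Icc (not_countable_Icc hab2)]
          exact Set.image_mono h1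
      rcases hpq.lt_or_gt with hlt | hlt
      · rw [hicc p q hp hq hlt]
        exact hTconn
      · rw [hicc q p hq hp hlt]
        exact hTconn
  -- compact images
  · intro K hK hKc
    rw [himg K hK hKc]
    exact hTcompact


end Stmt19

/-- A subset `E` of a commutative `K`-algebra `A` is strongly `lam`-algebrable: `E ∪ {0}`
contains a free commutative `K`-algebra with `lam` free generators; concretely, there is an
injective family of `lam` elements of `E` such that every nonzero polynomial over `K` without
constant term, evaluated at distinct members of the family, is nonzero and belongs to `E`. -/
def StronglyAlgebrable (K : Type) {A : Type} [CommRing K] [CommRing A] [Algebra K A]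
    (E : Set A) (lam : Cardinal) : Prop :=
  ∃ (ι : Type) (x : ι → A), #ι = lam ∧ Function.Injective x ∧
    (∀ i, x i ∈ E) ∧
    ∀ n : ℕ, 0 < n → ∀ P : MvPolynomial (Fin n) K, P ≠ 0 →
      MvPolynomial.constantCoeff P = 0 →
      ∀ ξ : Fin n → ι, Function.Injective ξ →
        MvPolynomial.aeval (fun i => x (ξ i)) P ≠ 0 ∧
        MvPolynomial.aeval (fun i => x (ξ i)) P ∈ E

/-- The set of nowhere continuous Darboux functions `f : ℝ → ℝ` which map
every uncountable compact set onto a compact set is strongly `2 ^ 𝔠`-algebrable in `ℝ^ℝ`. -/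
theorem stmt19 :
    StronglyAlgebrable ℝ
      {f : ℝ → ℝ | (∀ x : ℝ, ¬ContinuousAt f x) ∧
        (∀ C : Set ℝ, IsPreconnected C → IsPreconnected (f '' C)) ∧
        ∀ K : Set ℝ, IsCompact K → ¬ K.Countable → IsCompact (f '' K)}
      ((2 : Cardinal) ^ Cardinal.continuum) := by
  refine ⟨Set ℝ, Stmt19.f, ?_, ?_, ?_, ?_⟩
  · rw [Cardinal.mk_set, Cardinal.mk_real]
  · intro X Y hXY
    by_contra hne
    have hinj : Function.Injective ![X, Y] := by
      intro i j hij
      fin_cases i <;> fin_cases j <;> simp_all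
    obtain ⟨x, -, hx⟩ := Stmt19.key_surj ![X, Y] hinj isCompact_Icc
      (Stmt19.not_countable_Icc one_pos) ![1, 2] (by intro i; fin_cases i <;> norm_num)
    have h0 := hx 0
    have h1 := hx 1
    simp only [Matrix.cons_val_zero, Matrix.cons_val_one, Matrix.head_cons] at h0 h1
    rw [hXY] at h0
    rw [h0] at h1
    norm_num at h1
  · intro X
    have hm := Stmt19.master (MvPolynomial.X 0) (MvPolynomial.X_ne_zero (R := ℝ) (σ := Fin 1) 0)
      (MvPolynomial.constantCoeff_X (R := ℝ) (0 : Fin 1)) (fun _ : Fin 1 => X)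
      (Function.injective_of_subsingleton _)
    rw [MvPolynomial.aeval_X] at hm
    exact hm.2
  · intro n _ P hP h0 ξ hξ
    exact Stmt19.master P hP h0 ξ hξ
end
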